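/- For a nonempty finite set S of positive integers, define its genus γ(S) = 2·max(S) + 1 and its sign ε(S) = (−1)^{|S|+1}. For every natural number g, the sum over all finite sequences (S₁, …, S_r), r ≥ 0, of nonempty finite sets of positive integers satisfying γ(S₁) + ⋯ + γ(S_r) = g, of the product ε(S₁)⋯ε(S_r), equals 1 if 3 divides g, and equals 0 otherwise. (There are only finitely many such sequences for each g, since each γ(S_j) ≥ 3 and max(S_j) ≤ g.) -/

import Mathlib

open Finset in
private def tog (S : Finset ℕ) : Finset ℕ :=
  if 1 ∈ S then S.erase 1 else insert 1 S

private def Flip : List (Finset ℕ) → List (Finset ℕ)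
  | [] => []
  | S :: t => if S = {1} then S :: Flip t else tog S :: t

private lemma two_le_sup {S : Finset ℕ} (h1 : S.Nonempty) (h2 : ∀ m ∈ S, 0 < m)
    (h3 : S ≠ {1}) : 2 ≤ S.sup id := by
  by_contra h
  push_neg at h
  apply h3
  have hsub : S ⊆ {1} := by
    intro m hm
    have hle : m ≤ S.sup id := Finset.le_sup (f := id) hm
    have : m ≤ 1 := by omega
    have := h2 m hm
    simp only [Finset.mem_singleton]
    omega
  exact (Finset.Nonempty.subset_singleton_iff h1).mp hsub

private lemma sup_tog {S : Finset ℕ} (h : 2 ≤ S.sup id) : (tog S).sup id = S.sup id := by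
  unfold tog
  have hne : S.Nonempty := by
    rcases S.eq_empty_or_nonempty with rfl | hx
    · simp at h
    · exact hx
  split_ifs with h1
  · obtain ⟨M, hM, hMe⟩ := Finset.exists_mem_eq_sup S hne id
    refine le_antisymm (Finset.sup_mono (Finset.erase_subset _ _)) ?_
    have hMne : M ≠ 1 := by simp only [id] at hMe; omega
    have : M ∈ S.erase 1 := Finset.mem_erase.mpr ⟨hMne, hM⟩
    calc S.sup id = id M := hMe
    _ ≤ (S.erase 1).sup id := Finset.le_sup this
  · rw [Finset.sup_insert]
    simp only [id]
    omega

private lemma tog_nonempty {S : Finset ℕ} (h : 2 ≤ S.sup id) : (tog S).Nonempty := by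
  rcases (tog S).eq_empty_or_nonempty with he | hx
  · exfalso
    have := sup_tog h
    rw [he] at this
    simp at this
    omega
  · exact hx

private lemma tog_pos {S : Finset ℕ} (h2 : ∀ m ∈ S, 0 < m) : ∀ m ∈ tog S, 0 < m := by
  intro m hm
  unfold tog at hm
  split_ifs at hm with h1
  · exact h2 m (Finset.mem_of_mem_erase hm)
  · rcases Finset.mem_insert.mp hm with rfl | hm
    · omega
    · exact h2 m hm

private lemma tog_ne_one {S : Finset ℕ} (h : 2 ≤ S.sup id) : tog S ≠ {1} := by
  intro he
  have := sup_tog h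
  rw [he] at this
  simp at this
  omega

private lemma tog_tog {S : Finset ℕ} : tog (tog S) = S := by
  unfold tog
  split_ifs with h1 h2 h2
  · simp at h2
  · exact Finset.insert_erase h1
  · exact Finset.erase_insert h1
  · simp at h2

private lemma tog_ne {S : Finset ℕ} : tog S ≠ S := by
  unfold tog
  split_ifs with h1
  · intro he
    have : (1 : ℕ) ∉ S.erase 1 := Finset.notMem_erase 1 S
    rw [he] at this
    exact this h1
  · intro he
    have : (1 : ℕ) ∈ insert 1 S := Finset.mem_insert_self 1 S
    rw [he] at this
    exact h1 this

private lemma tog_sign {S : Finset ℕ} (h : 2 ≤ S.sup id) :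
    ((-1 : ℤ) ^ ((tog S).card + 1)) = -(-1 : ℤ) ^ (S.card + 1) := by
  unfold tog
  split_ifs with h1
  · have hc : S.card = (S.erase 1).card + 1 := by
      rw [Finset.card_erase_of_mem h1]
      have : 1 ≤ S.card := Finset.card_pos.mpr ⟨1, h1⟩
      omega
    rw [hc]
    ring
  · rw [Finset.card_insert_of_notMem h1]
    ring

/-- The key bundle of properties of `Flip` on valid, non-fixed lists. -/
private lemma flip_bundle (l : List (Finset ℕ))
    (hval : ∀ S ∈ l, S.Nonempty ∧ ∀ m ∈ S, 0 < m)
    (hnf : ¬ ∀ S ∈ l, S = {1}) :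
    (∀ S ∈ Flip l, S.Nonempty ∧ ∀ m ∈ S, 0 < m) ∧
    ((Flip l).map fun S => 2 * S.sup id + 1).sum = (l.map fun S => 2 * S.sup id + 1).sum ∧
    ((Flip l).map fun S : Finset ℕ => (-1 : ℤ) ^ (S.card + 1)).prod
      = -(l.map fun S : Finset ℕ => (-1 : ℤ) ^ (S.card + 1)).prod ∧
    (¬ ∀ S ∈ Flip l, S = {1}) ∧
    Flip (Flip l) = l ∧ Flip l ≠ l := by
  induction l with
  | nil => exact absurd (by simp) hnf
  | cons S t ih =>
    by_cases hS : S = {1}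
    · have hvt : ∀ T ∈ t, T.Nonempty ∧ ∀ m ∈ T, 0 < m := fun T hT => hval T (by simp [hT])
      have hnt : ¬ ∀ T ∈ t, T = {1} := by
        intro hall
        exact hnf (by
          intro T hT
          rcases List.mem_cons.mp hT with rfl | hT
          · exact hS
          · exact hall T hT)
      obtain ⟨i1, i2, i3, i4, i5, i6⟩ := ih hvt hnt
      have hF : Flip (S :: t) = S :: Flip t := by simp [Flip, hS]
      refine ⟨?_, ?_, ?_, ?_, ?_, ?_⟩
      · rw [hF]
        intro T hT
        rcases List.mem_cons.mp hT with rfl | hT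
        · exact hval T (by simp)
        · exact i1 T hT
      · rw [hF]; simp [i2]
      · rw [hF]; simp [i3]
      · rw [hF]
        intro hall
        exact i4 (fun T hT => hall T (by simp [hT]))
      · rw [hF]
        simp [Flip, hS, i5]
      · rw [hF]
        intro he
        exact i6 (List.cons.injEq .. ▸ he |>.2)
    · have hvS := hval S (by simp)
      have h2 : 2 ≤ S.sup id := two_le_sup hvS.1 hvS.2 hS
      have hF : Flip (S :: t) = tog S :: t := by simp [Flip, hS]
      refine ⟨?_, ?_, ?_, ?_, ?_, ?_⟩
      · rw [hF]
        intro T hT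
        rcases List.mem_cons.mp hT with rfl | hT
        · exact ⟨tog_nonempty h2, tog_pos hvS.2⟩
        · exact hval T (by simp [hT])
      · rw [hF]; simp [sup_tog h2]
      · rw [hF]; simp [tog_sign h2]
      · rw [hF]
        intro hall
        exact tog_ne_one h2 (hall (tog S) (by simp))
      · rw [hF]
        simp [Flip, tog_ne_one h2, tog_tog]
      · rw [hF]
        intro he
        exact tog_ne (List.cons.injEq .. ▸ he |>.1)

/-- For a nonempty finite set `S` of positive integers, with genus `γ(S) = 2·max(S) + 1` and
sign `ε(S) = (−1)^{|S|+1}`, the sum over all finite sequences `(S₁, …, S_r)` of nonempty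
finite sets of positive integers with `γ(S₁) + ⋯ + γ(S_r) = g` of `ε(S₁)⋯ε(S_r)` equals `1`
if `3 ∣ g` and `0` otherwise. -/
theorem euler_characteristic_of_tensor_algebra (g : ℕ) :
    (∑ᶠ l ∈ {l : List (Finset ℕ) |
        (∀ S ∈ l, S.Nonempty ∧ ∀ m ∈ S, 0 < m) ∧
        (l.map fun S => 2 * S.sup id + 1).sum = g},
      (l.map fun S : Finset ℕ => (-1 : ℤ) ^ (S.card + 1)).prod) =
      if 3 ∣ g then 1 else 0 := by
  classical
  set A : Set (List (Finset ℕ)) := {l : List (Finset ℕ) |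
        (∀ S ∈ l, S.Nonempty ∧ ∀ m ∈ S, 0 < m) ∧
        (l.map fun S => 2 * S.sup id + 1).sum = g} with hA
  set f : List (Finset ℕ) → ℤ :=
    fun l => (l.map fun S : Finset ℕ => (-1 : ℤ) ^ (S.card + 1)).prod with hf
  -- Finiteness of A
  have hK : {S : Finset ℕ | S ⊆ Finset.range (g + 1)}.Finite :=
    Set.Finite.ofFinset ((Finset.range (g + 1)).powerset) (by simp [Finset.mem_powerset])
  haveI := hK.to_subtype
  have hfin : A.Finite := by
    have hL : {l : List ↥{S : Finset ℕ | S ⊆ Finset.range (g + 1)} | l.length ≤ g}.Finite :=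
      List.finite_length_le _ g
    apply Set.Finite.subset (hL.image (List.map Subtype.val))
    rintro l ⟨hval, hw⟩
    have hmem : ∀ S ∈ l, S ⊆ Finset.range (g + 1) := by
      intro S hS m hm
      have h1 : 2 * S.sup id + 1 ≤ (l.map fun S => 2 * S.sup id + 1).sum := by
        apply List.single_le_sum (by intro x _; omega)
        exact List.mem_map_of_mem hS
      have h2 : m ≤ S.sup id := Finset.le_sup (f := id) hm
      rw [Finset.mem_range]
      omega
    refine ⟨l.attach.map fun x => ⟨x.1, hmem x.1 x.2⟩, ?_, ?_⟩
    · simp only [Set.mem_setOf_eq, List.length_map, List.length_attach]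
      have h3 : (l.map fun (_ : Finset ℕ) => 1).sum ≤ (l.map fun S => 2 * S.sup id + 1).sum :=
        List.sum_le_sum (by intro x _; omega)
      rw [hw] at h3
      simpa using h3
    · simp
  rw [finsum_mem_eq_finite_toFinset_sum _ hfin]
  set s := hfin.toFinset with hs
  have hmem_s : ∀ l, l ∈ s ↔ l ∈ A := fun l => Set.Finite.mem_toFinset hfin
  set p : List (Finset ℕ) → Prop := fun l => ∀ S ∈ l, S = {1} with hp
  rw [← Finset.sum_filter_add_sum_filter_not s p f]
  -- The non-fixed part sums to zero by the involution `Flip`.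
  have hnonfixed : ∑ l ∈ s.filter (fun l => ¬ p l), f l = 0 := by
    apply Finset.sum_involution (g := fun l _ => Flip l)
    · intro l hl
      rw [Finset.mem_filter, hmem_s] at hl
      obtain ⟨⟨hval, hw⟩, hnp⟩ := hl
      have := flip_bundle l hval hnp
      rw [hf]
      simp only []
      rw [this.2.2.1]
      ring
    · intro l hl _
      rw [Finset.mem_filter, hmem_s] at hl
      obtain ⟨⟨hval, hw⟩, hnp⟩ := hl
      exact (flip_bundle l hval hnp).2.2.2.2.2
    · intro l hl
      rw [Finset.mem_filter, hmem_s] at hl ⊢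
      obtain ⟨⟨hval, hw⟩, hnp⟩ := hl
      obtain ⟨b1, b2, b3, b4, b5, b6⟩ := flip_bundle l hval hnp
      exact ⟨⟨b1, by rw [b2, hw]⟩, b4⟩
    · intro l hl
      rw [Finset.mem_filter, hmem_s] at hl
      obtain ⟨⟨hval, hw⟩, hnp⟩ := hl
      exact (flip_bundle l hval hnp).2.2.2.2.1
  rw [hnonfixed, add_zero]
  -- The fixed part.
  have hchar : ∀ l, l ∈ s.filter p ↔ (∃ r, l = List.replicate r ({1} : Finset ℕ) ∧ 3 * r = g) := by
    intro l
    rw [Finset.mem_filter, hmem_s]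
    constructor
    · rintro ⟨⟨hval, hw⟩, hpl⟩
      refine ⟨l.length, ?_, ?_⟩
      · exact List.eq_replicate_of_mem hpl
      · have : l = List.replicate l.length ({1} : Finset ℕ) := List.eq_replicate_of_mem hpl
        rw [this] at hw
        simp at hw
        omega
    · rintro ⟨r, rfl, hr⟩
      refine ⟨⟨?_, ?_⟩, ?_⟩
      · intro S hS
        rw [List.eq_of_mem_replicate hS]
        constructor
        · exact ⟨1, by simp⟩
        · intro m hm; simp at hm; omega
      · simp
        omega
      · intro S hS
        exact List.eq_of_mem_replicate hS
  by_cases h3 : 3 ∣ g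
  · obtain ⟨r, rfl⟩ := h3
    have hset : s.filter p = {List.replicate r ({1} : Finset ℕ)} := by
      ext l
      rw [hchar, Finset.mem_singleton]
      constructor
      · rintro ⟨r', rfl, hr'⟩
        have : r' = r := by omega
        rw [this]
      · rintro rfl
        exact ⟨r, rfl, rfl⟩
    rw [hset, Finset.sum_singleton]
    have : f (List.replicate r ({1} : Finset ℕ)) = 1 := by
      rw [hf]
      simp [List.map_replicate, List.prod_replicate]
    rw [this, if_pos ⟨r, rfl⟩]
  · have hset : s.filter p = ∅ := by
      ext l
      rw [hchar]
      simp only [Finset.notMem_empty, iff_false]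
      rintro ⟨r, rfl, hr⟩
      exact h3 ⟨r, hr.symm⟩
    rw [hset, Finset.sum_empty, if_neg h3]
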